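/- Let H ∈ (0, 1/2] and let K(t) = t^{H−1/2}·log(1 + 1/t)/Γ(H+1/2) be the log-modulated Riemann–Liouville kernel. Then lim_{n→∞} n^{2H}·(log n)^{-2} · ∫_0^{1/n} K(r)² dr = 1/(2H·Γ(H+1/2)²); equivalently, λ(n) := (∫_0^{1/n} K(r)² dr)^{-1} satisfies λ(n) ~ 2H·Γ(H+1/2)²·n^{2H}/(log n)². -/

import Mathlib

open Real MeasureTheory Filter Set

private lemma neg_log_le_aux {t c : ℝ} (ht : 0 < t) (hc : 0 < c) :
    -Real.log t ≤ t ^ (-c) / c := by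
  have h := Real.log_le_rpow_div (x := t⁻¹) (inv_nonneg.2 ht.le) hc
  rwa [Real.log_inv, Real.inv_rpow ht.le, ← Real.rpow_neg ht.le] at h

private lemma integrableOn_rpow_Ioc_aux {r ε : ℝ} (hr : -1 < r) :
    IntegrableOn (fun t : ℝ => t ^ r) (Ioc 0 ε) := by
  rcases le_or_gt ε 0 with h | h
  · rw [Set.Ioc_eq_empty (by simpa using not_lt.2 h)]; exact integrableOn_empty
  · exact (intervalIntegrable_iff_integrableOn_Ioc_of_le h.le).1
      (intervalIntegral.intervalIntegrable_rpow' hr)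

private lemma integrableOn_dominated_aux {f : ℝ → ℝ} {r C ε : ℝ} (hr : -1 < r)
    (hm : Measurable f) (hbound : ∀ t ∈ Ioc (0:ℝ) ε, |f t| ≤ C * t ^ r) :
    IntegrableOn f (Ioc 0 ε) := by
  apply Integrable.mono ((integrableOn_rpow_Ioc_aux hr).const_mul C)
    hm.aestronglyMeasurable
  filter_upwards [ae_restrict_mem measurableSet_Ioc] with t ht
  calc ‖f t‖ = |f t| := rfl
    _ ≤ C * t ^ r := hbound t ht
    _ ≤ |C * t ^ r| := le_abs_self _
    _ = ‖C * t ^ r‖ := rfl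

private lemma integrableOn_psi_aux {a ε : ℝ} (ha : 0 < a) (hε1 : ε ≤ 1) :
    IntegrableOn (fun t : ℝ => t ^ (a - 1) * Real.log t ^ 2) (Ioc 0 ε) := by
  apply integrableOn_dominated_aux (r := a/2 - 1) (C := 16/a^2) (by linarith)
  · apply Measurable.mul
    · measurability
    · exact Real.measurable_log.pow_const 2
  · intro t ht
    obtain ⟨ht0, htε⟩ := ht
    have ht1 : t ≤ 1 := htε.trans hε1
    have hp : (0:ℝ) < t ^ (a - 1) := Real.rpow_pos_of_pos ht0 _
    have hl0 : 0 ≤ -Real.log t := neg_nonneg.2 (Real.log_nonpos ht0.le ht1)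
    have hl : -Real.log t ≤ t ^ (-(a/4)) / (a/4) := neg_log_le_aux ht0 (by linarith)
    have hsq : Real.log t ^ 2 ≤ (t ^ (-(a/4)) / (a/4)) ^ 2 := by
      have : Real.log t ^ 2 = (-Real.log t) ^ 2 := by ring
      rw [this]
      exact pow_le_pow_left₀ hl0 hl 2
    have hkey : (t ^ (-(a/4)) / (a/4)) ^ 2 = (16/a^2) * t ^ (-(a/2)) := by
      rw [div_pow, ← Real.rpow_natCast (t ^ (-(a/4))) 2, ← Real.rpow_mul ht0.le]
      push_cast
      rw [show -(a/4) * 2 = -(a/2) by ring]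
      field_simp
      ring
    rw [abs_of_nonneg (by positivity)]
    calc t ^ (a - 1) * Real.log t ^ 2 ≤ t ^ (a - 1) * ((16/a^2) * t ^ (-(a/2))) := by
          rw [hkey] at hsq
          exact mul_le_mul_of_nonneg_left hsq hp.le
      _ = 16/a^2 * t ^ (a/2 - 1) := by
          rw [show a/2 - 1 = (a - 1) + -(a/2) by ring, Real.rpow_add ht0]
          ring

private lemma integrableOn_phi_aux {a ε : ℝ} (ha : 0 < a) (hε1 : ε ≤ 1) :
    IntegrableOn (fun t : ℝ => t ^ (a - 1) * Real.log (1 + 1/t) ^ 2) (Ioc 0 ε) := by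
  apply integrableOn_dominated_aux (r := a/2 - 1) (C := (1 + 4/a)^2) (by linarith)
  · have h1 : Measurable (fun t : ℝ => 1 + 1/t) := by
      simp only [one_div]; exact measurable_const.add measurable_inv
    apply Measurable.mul
    · measurability
    · exact (Real.measurable_log.comp h1).pow_const 2
  · intro t ht
    obtain ⟨ht0, htε⟩ := ht
    have ht1 : t ≤ 1 := htε.trans hε1
    have hp : (0:ℝ) < t ^ (a - 1) := Real.rpow_pos_of_pos ht0 _
    have hL0 : 0 ≤ Real.log (1 + 1/t) := Real.log_nonneg (by
      have : 0 < 1/t := by positivity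
      linarith)
    have hr1 : (1:ℝ) ≤ t ^ (-(a/4)) :=
      Real.one_le_rpow_of_pos_of_le_one_of_nonpos ht0 ht1 (by linarith)
    have hL1 : Real.log (1 + 1/t) ≤ (1 + 4/a) * t ^ (-(a/4)) := by
      have h2t : 1 + 1/t ≤ 2/t := by
        rw [le_div_iff₀ ht0]
        have ht' : (1 + 1/t) * t = t + 1 := by field_simp
        rw [ht']
        linarith
      have hlog2t : Real.log (1 + 1/t) ≤ Real.log (2/t) :=
        Real.log_le_log (by positivity) h2t
      have hsplit : Real.log (2/t) = Real.log 2 - Real.log t :=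
        Real.log_div two_ne_zero ht0.ne'
      have hlog2 : Real.log 2 ≤ 1 := by
        have := Real.log_le_sub_one_of_pos (x := 2) (by norm_num)
        linarith
      have hl : -Real.log t ≤ t ^ (-(a/4)) / (a/4) := neg_log_le_aux ht0 (by linarith)
      have h4a : t ^ (-(a/4)) / (a/4) = (4/a) * t ^ (-(a/4)) := by
        field_simp
      rw [h4a] at hl
      calc Real.log (1 + 1/t) ≤ Real.log 2 - Real.log t := by rw [← hsplit]; exact hlog2t
        _ ≤ 1 + (4/a) * t ^ (-(a/4)) := by linarith
        _ ≤ t ^ (-(a/4)) + (4/a) * t ^ (-(a/4)) := by linarith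
        _ = (1 + 4/a) * t ^ (-(a/4)) := by ring
    have hsq : Real.log (1 + 1/t) ^ 2 ≤ ((1 + 4/a) * t ^ (-(a/4))) ^ 2 :=
      pow_le_pow_left₀ hL0 hL1 2
    have hkey : ((1 + 4/a) * t ^ (-(a/4))) ^ 2 = (1 + 4/a)^2 * t ^ (-(a/2)) := by
      rw [mul_pow, ← Real.rpow_natCast (t ^ (-(a/4))) 2, ← Real.rpow_mul ht0.le]
      push_cast
      rw [show -(a/4) * 2 = -(a/2) by ring]
    rw [abs_of_nonneg (by positivity)]
    calc t ^ (a - 1) * Real.log (1 + 1/t) ^ 2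
        ≤ t ^ (a - 1) * ((1 + 4/a)^2 * t ^ (-(a/2))) := by
          rw [hkey] at hsq
          exact mul_le_mul_of_nonneg_left hsq hp.le
      _ = (1 + 4/a)^2 * t ^ (a/2 - 1) := by
          rw [show a/2 - 1 = (a - 1) + -(a/2) by ring, Real.rpow_add ht0]
          ring

private lemma delta_bound_aux {a t : ℝ} (ha : 0 < a) (ht : 0 < t) (ht1 : t ≤ 1) :
    |t ^ (a - 1) * Real.log (1 + 1/t) ^ 2 - t ^ (a - 1) * Real.log t ^ 2|
      ≤ 5 * t ^ (a - 1/2) := by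
  have hp : (0:ℝ) < t ^ (a - 1) := Real.rpow_pos_of_pos ht _
  set L := Real.log (1 + t) with hL_def
  have hLlog : Real.log (1 + 1/t) = L - Real.log t := by
    rw [hL_def, ← Real.log_div (by positivity) ht.ne']
    congr 1
    field_simp
    ring
  have h0 : 0 ≤ L := Real.log_nonneg (by linarith)
  have h1 : L ≤ t := by
    have := Real.log_le_sub_one_of_pos (x := 1 + t) (by positivity)
    simp only [hL_def]
    linarith
  have h3 : 0 ≤ -Real.log t := neg_nonneg.2 (Real.log_nonpos ht.le ht1)
  have h2 : -Real.log t ≤ 2 * t ^ (-(1/2) : ℝ) := by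
    have h := neg_log_le_aux ht (by norm_num : (0:ℝ) < 1/2)
    calc -Real.log t ≤ t ^ (-(1/2):ℝ) / (1/2) := h
      _ = 2 * t ^ (-(1/2):ℝ) := by ring
  have e1 : t * t ^ (-(1/2):ℝ) = t ^ ((1/2):ℝ) := by
    nth_rewrite 1 [← Real.rpow_one t]
    rw [← Real.rpow_add ht]
    norm_num
  have e2 : t ^ 2 ≤ t ^ ((1/2):ℝ) := by
    rw [← Real.rpow_natCast t 2]
    apply Real.rpow_le_rpow_of_exponent_ge ht ht1
    push_cast
    norm_num
  have hX0 : 0 ≤ L^2 + 2 * L * (-Real.log t) := by positivity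
  have hkey : t ^ (a - 1) * Real.log (1 + 1/t) ^ 2 - t ^ (a - 1) * Real.log t ^ 2
      = t ^ (a - 1) * (L^2 + 2 * L * (-Real.log t)) := by
    rw [hLlog]; ring
  have hXle : L^2 + 2 * L * (-Real.log t) ≤ 5 * t ^ ((1/2):ℝ) := by
    have hb1 : L^2 ≤ t^2 := pow_le_pow_left₀ h0 h1 2
    have hb2 : L * (-Real.log t) ≤ t * (2 * t ^ (-(1/2):ℝ)) :=
      mul_le_mul h1 h2 h3 ht.le
    have : t * (2 * t ^ (-(1/2):ℝ)) = 2 * t ^ ((1/2):ℝ) := by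
      rw [show t * (2 * t ^ (-(1/2):ℝ)) = 2 * (t * t ^ (-(1/2):ℝ)) by ring, e1]
    rw [this] at hb2
    nlinarith
  rw [hkey, abs_of_nonneg (by positivity)]
  calc t ^ (a - 1) * (L^2 + 2 * L * (-Real.log t))
      ≤ t ^ (a - 1) * (5 * t ^ ((1/2):ℝ)) := mul_le_mul_of_nonneg_left hXle hp.le
    _ = 5 * t ^ (a - 1/2) := by
        rw [show a - 1/2 = (a - 1) + (1/2 : ℝ) by ring, Real.rpow_add ht]
        ring

private lemma ftc_psi_aux {a ε : ℝ} (ha : 0 < a) (hε : 0 < ε) (hε1 : ε ≤ 1) :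
    ∫ t in Ioc (0:ℝ) ε, t ^ (a - 1) * Real.log t ^ 2 =
      ε ^ a * Real.log ε ^ 2 / a - 2 * (ε ^ a * Real.log ε) / a ^ 2 + 2 * ε ^ a / a ^ 3 := by
  set G : ℝ → ℝ := fun x =>
    x ^ a * Real.log x ^ 2 / a - 2 * (x ^ a * Real.log x) / a ^ 2 + 2 * x ^ a / a ^ 3 with hG_def
  have hderiv : ∀ x ∈ Ioo (0:ℝ) ε, HasDerivAt G (x ^ (a - 1) * Real.log x ^ 2) x := by
    intro x hx
    have hx0 : 0 < x := hx.1
    have hp : HasDerivAt (fun y : ℝ => y ^ a) (a * x ^ (a - 1)) x :=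
      Real.hasDerivAt_rpow_const (Or.inl hx0.ne')
    have hl : HasDerivAt Real.log x⁻¹ x := Real.hasDerivAt_log hx0.ne'
    have hl2 : HasDerivAt (fun y : ℝ => Real.log y ^ 2) (2 * Real.log x * x⁻¹) x := by
      have := hl.fun_pow 2
      simpa [pow_one] using this
    have hA := hp.mul hl2
    have hB := hp.mul hl
    have hG' := ((hA.div_const a).sub ((hB.const_mul 2).div_const (a^2))).add
      ((hp.const_mul 2).div_const (a^3))
    refine hG'.congr_deriv ?_
    have hxa : x ^ a = x ^ (a - 1) * x := by
      rw [← Real.rpow_add_one hx0.ne' (a - 1)]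
      ring_nf
    rw [hxa]
    field_simp
    ring
  have hint : IntervalIntegrable (fun t : ℝ => t ^ (a - 1) * Real.log t ^ 2) volume 0 ε :=
    (intervalIntegrable_iff_integrableOn_Ioc_of_le hε.le).2 (integrableOn_psi_aux ha hε1)
  have ha0 : Tendsto G (nhdsWithin 0 (Ioi 0)) (nhds 0) := by
    have hmul : Tendsto (fun x : ℝ => Real.log x * x ^ (a/2)) (nhdsWithin 0 (Ioi 0)) (nhds 0) :=
      tendsto_log_mul_rpow_nhdsGT_zero (by linarith)
    have h1 : Tendsto (fun x : ℝ => x ^ a * Real.log x ^ 2) (nhdsWithin 0 (Ioi 0)) (nhds 0) := by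
      have := hmul.mul hmul
      rw [mul_zero] at this
      apply this.congr'
      filter_upwards [self_mem_nhdsWithin] with x hx
      have hx0 : (0:ℝ) < x := hx
      rw [show x ^ a = x ^ (a/2) * x ^ (a/2) by rw [← Real.rpow_add hx0]; ring_nf]
      ring
    have h2 : Tendsto (fun x : ℝ => x ^ a * Real.log x) (nhdsWithin 0 (Ioi 0)) (nhds 0) := by
      have hmul' : Tendsto (fun x : ℝ => Real.log x * x ^ a) (nhdsWithin 0 (Ioi 0)) (nhds 0) :=
        tendsto_log_mul_rpow_nhdsGT_zero ha
      apply hmul'.congr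
      intro x
      ring
    have h3 : Tendsto (fun x : ℝ => x ^ a) (nhdsWithin 0 (Ioi 0)) (nhds 0) := by
      have hcont : ContinuousAt (fun x : ℝ => x ^ a) 0 :=
        Real.continuousAt_rpow_const 0 a (Or.inr ha.le)
      have := hcont.continuousWithinAt (s := Ioi 0)
      rw [ContinuousWithinAt, Real.zero_rpow ha.ne'] at this
      exact this
    have := ((h1.div_const a).sub ((h2.const_mul 2).div_const (a^2))).add
      ((h3.const_mul 2).div_const (a^3))
    norm_num at this
    exact this
  have haε : Tendsto G (nhdsWithin ε (Iio ε)) (nhds (G ε)) := by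
    have hcont : ContinuousAt G ε := by
      have hrp : ContinuousAt (fun x : ℝ => x ^ a) ε :=
        Real.continuousAt_rpow_const ε a (Or.inl hε.ne')
      have hlog : ContinuousAt Real.log ε := Real.continuousAt_log hε.ne'
      exact (((hrp.mul (hlog.pow 2)).div_const a).sub
        (((hrp.mul hlog).const_mul 2).div_const (a^2))).add
        ((hrp.const_mul 2).div_const (a^3))
    exact hcont.continuousWithinAt
  have := intervalIntegral.integral_eq_sub_of_hasDerivAt_of_tendsto hε hderiv hint ha0 haε
  rw [intervalIntegral.integral_of_le hε.le] at this
  rw [this]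
  simp [hG_def]

/-- For the log-modulated Riemann–Liouville kernel
`K(t) = t^{H−1/2} log(1+1/t)/Γ(H+1/2)` with `H ∈ (0,1/2]`, one has
`n^{2H} (log n)^{-2} ∫_0^{1/n} K(r)² dr → 1/(2H·Γ(H+1/2)²)`; equivalently,
`λ(n) = (∫_0^{1/n} K(r)² dr)⁻¹` satisfies `λ(n) ~ 2H·Γ(H+1/2)²·n^{2H}/(log n)²`. -/
theorem log_modulated_kernel_scaling (H : ℝ) (hH0 : 0 < H) (hH : H ≤ 1 / 2)
    (K : ℝ → ℝ)
    (hK : ∀ t : ℝ, K t = t ^ (H - 1 / 2) * Real.log (1 + 1 / t) / Real.Gamma (H + 1 / 2)) :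
    Tendsto (fun n : ℕ =>
        (n : ℝ) ^ (2 * H) / Real.log n ^ 2 * ∫ r in Set.Ioc 0 (1 / (n : ℝ)), K r ^ 2)
        atTop (nhds (1 / (2 * H * Real.Gamma (H + 1 / 2) ^ 2))) ∧
    Tendsto (fun n : ℕ =>
        (∫ r in Set.Ioc 0 (1 / (n : ℝ)), K r ^ 2)⁻¹ * Real.log n ^ 2 /
          (2 * H * Real.Gamma (H + 1 / 2) ^ 2 * (n : ℝ) ^ (2 * H)))
        atTop (nhds 1) := by
  have hc : 0 < Real.Gamma (H + 1/2) := Real.Gamma_pos_of_pos (by linarith)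
  set c := Real.Gamma (H + 1/2) with hc_def
  set a := 2 * H with ha_def
  have ha : 0 < a := by positivity
  have hone_lt_log : ∀ n : ℕ, 3 ≤ n → 1 ≤ Real.log n := by
    intro n hn
    have h3 : (3:ℝ) ≤ (n:ℝ) := by exact_mod_cast hn
    have he : Real.exp 1 ≤ 3 := by
      have := Real.exp_one_lt_d9
      linarith
    calc (1:ℝ) = Real.log (Real.exp 1) := (Real.log_exp 1).symm
      _ ≤ Real.log n := Real.log_le_log (Real.exp_pos 1) (by linarith)
  -- the eventual identity
  have key : ∀ᶠ n : ℕ in atTop,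
      (n : ℝ) ^ a / Real.log n ^ 2 * ∫ r in Set.Ioc 0 (1 / (n : ℝ)), K r ^ 2
        = (1/a + 2/(a^2 * Real.log n) + 2/(a^3 * Real.log n ^ 2))/c^2
          + (n : ℝ) ^ a / Real.log n ^ 2 *
            (∫ t in Set.Ioc 0 (1/(n:ℝ)),
              (t ^ (a - 1) * Real.log (1 + 1/t) ^ 2 - t ^ (a - 1) * Real.log t ^ 2)) / c^2 := by
    filter_upwards [eventually_ge_atTop 3] with n hn
    have h3 : (3:ℝ) ≤ (n:ℝ) := by exact_mod_cast hn
    have hnpos : (0:ℝ) < n := by linarith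
    have hε : 0 < 1/(n:ℝ) := by positivity
    have hε1 : 1/(n:ℝ) ≤ 1 := by
      rw [div_le_one hnpos]; linarith
    have hl1 : 1 ≤ Real.log n := hone_lt_log n hn
    have hl0 : Real.log n ≠ 0 := by linarith
    have hna : (0:ℝ) < (n:ℝ) ^ a := Real.rpow_pos_of_pos hnpos a
    -- rewrite the kernel integral
    have h1 : (∫ r in Set.Ioc 0 (1/(n:ℝ)), K r ^ 2)
        = (∫ r in Set.Ioc 0 (1/(n:ℝ)), r ^ (a - 1) * Real.log (1 + 1/r) ^ 2) / c^2 := by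
      rw [← integral_div]
      apply setIntegral_congr_fun measurableSet_Ioc
      intro r hr
      have hr0 : 0 < r := hr.1
      show K r ^ 2 = r ^ (a - 1) * Real.log (1 + 1/r) ^ 2 / c ^ 2
      have hpow : (r ^ (H - 1/2))^2 = r ^ (a - 1) := by
        rw [← Real.rpow_natCast (r ^ (H - 1/2)) 2, ← Real.rpow_mul hr0.le]
        congr 1
        push_cast
        rw [ha_def]
        ring
      rw [hK r, div_pow, mul_pow, hpow]
    -- split the integral
    have hψi : IntegrableOn (fun t : ℝ => t ^ (a - 1) * Real.log t ^ 2)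
        (Ioc 0 (1/(n:ℝ))) := integrableOn_psi_aux ha hε1
    have hφi : IntegrableOn (fun t : ℝ => t ^ (a - 1) * Real.log (1 + 1/t) ^ 2)
        (Ioc 0 (1/(n:ℝ))) := integrableOn_phi_aux ha hε1
    have h2 : (∫ r in Set.Ioc 0 (1/(n:ℝ)), r ^ (a - 1) * Real.log (1 + 1/r) ^ 2)
        = (∫ t in Set.Ioc 0 (1/(n:ℝ)), t ^ (a - 1) * Real.log t ^ 2)
          + ∫ t in Set.Ioc 0 (1/(n:ℝ)),
              (t ^ (a - 1) * Real.log (1 + 1/t) ^ 2 - t ^ (a - 1) * Real.log t ^ 2) := by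
      rw [integral_sub hφi hψi]
      ring
    have h3' : (∫ t in Set.Ioc 0 (1/(n:ℝ)), t ^ (a - 1) * Real.log t ^ 2)
        = (1/(n:ℝ)) ^ a * Real.log (1/(n:ℝ)) ^ 2 / a
          - 2 * ((1/(n:ℝ)) ^ a * Real.log (1/(n:ℝ))) / a ^ 2 + 2 * (1/(n:ℝ)) ^ a / a ^ 3 :=
      ftc_psi_aux ha hε hε1
    have hlogε : Real.log (1/(n:ℝ)) = -Real.log n := by
      rw [one_div, Real.log_inv]
    have hεa : (1/(n:ℝ)) ^ a = ((n:ℝ) ^ a)⁻¹ := by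
      rw [one_div, Real.inv_rpow hnpos.le]
    rw [h1, h2, h3', hlogε, hεa]
    field_simp
    ring
  -- limit of the main term
  have hlog : Tendsto (fun n : ℕ => Real.log n) atTop atTop :=
    Real.tendsto_log_atTop.comp tendsto_natCast_atTop_atTop
  have hinv : Tendsto (fun n : ℕ => (Real.log n)⁻¹) atTop (nhds 0) :=
    hlog.inv_tendsto_atTop
  have t1 : Tendsto (fun n : ℕ => 2/(a^2 * Real.log n)) atTop (nhds 0) := by
    have := hinv.const_mul (2/a^2)
    rw [mul_zero] at this
    apply this.congr
    intro n
    rw [div_mul_eq_div_div]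
    rw [div_eq_mul_inv (2/a^2)]
  have t2 : Tendsto (fun n : ℕ => 2/(a^3 * Real.log n ^ 2)) atTop (nhds 0) := by
    have := (hinv.mul hinv).const_mul (2/a^3)
    rw [mul_zero, mul_zero] at this
    apply this.congr
    intro n
    simp only [div_eq_mul_inv, mul_inv, sq]
    ring
  have hA : Tendsto (fun n : ℕ =>
      (1/a + 2/(a^2 * Real.log n) + 2/(a^3 * Real.log n ^ 2))/c^2) atTop
      (nhds ((1/a + 0 + 0)/c^2)) :=
    ((tendsto_const_nhds.add t1).add t2).div_const _
  -- limit of the remainder term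
  have hB : Tendsto (fun n : ℕ =>
      (n : ℝ) ^ a / Real.log n ^ 2 *
        (∫ t in Set.Ioc 0 (1/(n:ℝ)),
          (t ^ (a - 1) * Real.log (1 + 1/t) ^ 2 - t ^ (a - 1) * Real.log t ^ 2)) / c^2)
      atTop (nhds 0) := by
    apply squeeze_zero_norm' (a := fun n : ℕ => 5/((a + 1/2) * c^2) * (n:ℝ) ^ (-(1/2) : ℝ))
    · filter_upwards [eventually_ge_atTop 3] with n hn
      have h3 : (3:ℝ) ≤ (n:ℝ) := by exact_mod_cast hn
      have hnpos : (0:ℝ) < n := by linarith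
      have hε : 0 < 1/(n:ℝ) := by positivity
      have hε1 : 1/(n:ℝ) ≤ 1 := by rw [div_le_one hnpos]; linarith
      have hl1 : 1 ≤ Real.log n := hone_lt_log n hn
      have hna : (0:ℝ) < (n:ℝ) ^ a := Real.rpow_pos_of_pos hnpos a
      have hai : (0:ℝ) < a + 1/2 := by linarith
      -- bound the remainder integral
      have hgi : IntegrableOn (fun t : ℝ => 5 * t ^ (a - 1/2)) (Ioc 0 (1/(n:ℝ))) :=
        (integrableOn_rpow_Ioc_aux (by linarith)).const_mul 5
      have hR : ‖∫ t in Set.Ioc 0 (1/(n:ℝ)),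
          (t ^ (a - 1) * Real.log (1 + 1/t) ^ 2 - t ^ (a - 1) * Real.log t ^ 2)‖
          ≤ ∫ t in Set.Ioc 0 (1/(n:ℝ)), 5 * t ^ (a - 1/2) := by
        apply norm_integral_le_of_norm_le hgi
        filter_upwards [ae_restrict_mem measurableSet_Ioc] with t ht
        exact delta_bound_aux ha ht.1 (ht.2.trans hε1)
      have hRval : (∫ t in Set.Ioc 0 (1/(n:ℝ)), 5 * t ^ (a - 1/2))
          = 5 * ((1/(n:ℝ)) ^ (a + 1/2) / (a + 1/2)) := by
        rw [← intervalIntegral.integral_of_le hε.le,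
          intervalIntegral.integral_const_mul, integral_rpow (Or.inl (by linarith))]
        rw [Real.zero_rpow (by intro h; nlinarith [ha] : a - 1/2 + 1 ≠ 0), sub_zero,
          show a - 1/2 + 1 = a + 1/2 by ring]
      rw [hRval] at hR
      have hεna : (1/(n:ℝ)) ^ (a + 1/2) = ((n:ℝ) ^ (a + 1/2))⁻¹ := by
        rw [one_div, Real.inv_rpow hnpos.le]
      have hpq : (n:ℝ) ^ a * (1/(n:ℝ)) ^ (a + 1/2) = (n:ℝ) ^ (-(1/2) : ℝ) := by
        rw [hεna, ← Real.rpow_neg hnpos.le, ← Real.rpow_add hnpos]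
        ring_nf
      have hl2 : (1:ℝ) ≤ Real.log n ^ 2 := one_le_pow₀ hl1
      calc ‖(n : ℝ) ^ a / Real.log n ^ 2 *
              (∫ t in Set.Ioc 0 (1/(n:ℝ)),
                (t ^ (a - 1) * Real.log (1 + 1/t) ^ 2 - t ^ (a - 1) * Real.log t ^ 2)) / c^2‖
          = (n : ℝ) ^ a / Real.log n ^ 2 *
              ‖∫ t in Set.Ioc 0 (1/(n:ℝ)),
                (t ^ (a - 1) * Real.log (1 + 1/t) ^ 2 - t ^ (a - 1) * Real.log t ^ 2)‖ / c^2 := by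
            rw [Real.norm_eq_abs, abs_div, abs_mul, abs_div, Real.norm_eq_abs]
            rw [abs_of_nonneg hna.le, abs_of_nonneg (sq_nonneg (Real.log n)),
              abs_of_nonneg (sq_nonneg c)]
        _ ≤ (n : ℝ) ^ a / 1 *
              (5 * ((1/(n:ℝ)) ^ (a + 1/2) / (a + 1/2))) / c^2 := by
            gcongr
        _ = 5/((a + 1/2) * c^2) * (n:ℝ) ^ (-(1/2) : ℝ) := by
            rw [div_one, ← hpq]
            field_simp
    · have := ((tendsto_rpow_neg_atTop (by norm_num : (0:ℝ) < 1/2)).comp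
        tendsto_natCast_atTop_atTop).const_mul (5/((a + 1/2) * c^2))
      rw [mul_zero] at this
      exact this
  have hval : (1/a + 0 + 0)/c^2 + 0 = 1/(a * c^2) := by
    rw [add_zero, add_zero, add_zero, div_div]
  have first : Tendsto (fun n : ℕ =>
      (n : ℝ) ^ a / Real.log n ^ 2 * ∫ r in Set.Ioc 0 (1 / (n : ℝ)), K r ^ 2)
      atTop (nhds (1/(a * c^2))) := by
    rw [← hval]
    exact (hA.add hB).congr' (key.mono fun n hn => hn.symm)
  refine ⟨first, ?_⟩
  have h2fun : (fun n : ℕ =>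
      (∫ r in Set.Ioc 0 (1 / (n : ℝ)), K r ^ 2)⁻¹ * Real.log n ^ 2 /
        (a * c ^ 2 * (n : ℝ) ^ a))
      = fun n : ℕ =>
        ((n : ℝ) ^ a / Real.log n ^ 2 * ∫ r in Set.Ioc 0 (1 / (n : ℝ)), K r ^ 2)⁻¹ /
          (a * c^2) := by
    funext n
    simp only [div_eq_mul_inv, mul_inv, inv_inv]
    ring
  rw [h2fun]
  have hne : (1:ℝ)/(a * c^2) ≠ 0 := by positivity
  have := (first.inv₀ hne).div_const (a * c^2)
  rw [one_div, inv_inv, div_self (by positivity : a * c^2 ≠ 0)] at this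
  exact this
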